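/- Let G be a finite connected bipartite graph and let T_G = {M_1,...,M_r} be the set of indispensable monomials of I_G. Then C_min = {supp(M_1),...,supp(M_r)}; that is, a subset E of {1,...,m} is a minimal element of the collection of supports of positive/negative parts of circuits if and only if E is the support of an indispensable monomial. -/

import Mathlib

open MvPolynomial

noncomputable section

/-- The exponent of the variable `t j` in the image of `x i`: it is `1` if the vertex `j`
is an endpoint of the edge `e i`, and `0` otherwise (incidence vector of the edge `e i`). -/
def incid {n m : ℕ} (e : Fin m → Sym2 (Fin n)) (i : Fin m) (j : Fin n) : ℕ :=
  if j ∈ e i then 1 else 0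

/-- The `K`-algebra homomorphism `K[x_1,…,x_m] → K[t_1,…,t_n]` sending `x i` to
`t_j t_k`, where `e i = {v_j, v_k}`. -/
def toricMap (K : Type*) [CommRing K] {n m : ℕ} (e : Fin m → Sym2 (Fin n)) :
    MvPolynomial (Fin m) K →ₐ[K] MvPolynomial (Fin n) K :=
  aeval fun i => ∏ j, X j ^ incid e i j

/-- The toric ideal `I_G` of the graph with edges `e`. -/
def toricIdeal (K : Type*) [CommRing K] {n m : ℕ} (e : Fin m → Sym2 (Fin n)) :
    Ideal (MvPolynomial (Fin m) K) :=
  RingHom.ker (toricMap K e)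

/-- A binomial is a difference of two monomials. -/
def IsBinomial {K : Type*} [CommRing K] {σ : Type*} (p : MvPolynomial σ K) : Prop :=
  ∃ u v : σ →₀ ℕ, p = monomial u 1 - monomial v 1

/-- A nonzero integer vector `u` in the kernel of the incidence matrix `M_G` is a circuit
if its support is minimal among supports of nonzero kernel elements and its coordinates
are relatively prime. -/
def IsCircuit {n m : ℕ} (e : Fin m → Sym2 (Fin n)) (u : Fin m → ℤ) : Prop :=
  u ≠ 0 ∧ (∀ j : Fin n, ∑ i, (incid e i j : ℤ) * u i = 0) ∧
  (∀ v : Fin m → ℤ, v ≠ 0 → (∀ j : Fin n, ∑ i, (incid e i j : ℤ) * v i = 0) →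
      {i | v i ≠ 0} ⊆ {i | u i ≠ 0} → {i | v i ≠ 0} = {i | u i ≠ 0}) ∧
  Finset.univ.gcd u = 1

/-- The collection `C` of subsets of `{1,…,m}` that occur as the support of the positive
or the negative part of a circuit. -/
def circuitSupports {n m : ℕ} (e : Fin m → Sym2 (Fin n)) : Set (Set (Fin m)) :=
  {E | ∃ u : Fin m → ℤ, IsCircuit e u ∧ (E = {i | 0 < u i} ∨ E = {i | u i < 0})}

/-- `C_min`: the minimal elements, with respect to inclusion, of `circuitSupports e`. -/
def Cmin {n m : ℕ} (e : Fin m → Sym2 (Fin n)) : Set (Set (Fin m)) :=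
  {E ∈ circuitSupports e | ∀ E' ∈ circuitSupports e, E' ⊆ E → E' = E}

/-- The monomial `x^u` is indispensable for the ideal `I`: every system of binomial
generators of `I` contains a binomial one of whose monomials is `x^u`. -/
def IndispensableMonomial {K : Type*} [CommRing K] {m : ℕ}
    (I : Ideal (MvPolynomial (Fin m) K)) (u : Fin m →₀ ℕ) : Prop :=
  ∀ S : Set (MvPolynomial (Fin m) K), (∀ p ∈ S, IsBinomial p) → Ideal.span S = I →
    ∃ p ∈ S, ∃ v : Fin m →₀ ℕ,
      p = monomial u 1 - monomial v 1 ∨ p = monomial v 1 - monomial u 1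

/-- The edge family `e` is bipartite: the vertices split into a set `A` and its complement
such that every edge joins a vertex of `A` with a vertex outside `A`. -/
def IsBipartite {n m : ℕ} (e : Fin m → Sym2 (Fin n)) : Prop :=
  ∃ A : Set (Fin n), ∀ i : Fin m, ∀ v w : Fin n, e i = s(v, w) →
    ((v ∈ A ∧ w ∉ A) ∨ (v ∉ A ∧ w ∈ A))

-- scratch part A
namespace TP
open MvPolynomial Finset

variable {n m : ℕ} (e : Fin m → Sym2 (Fin n))

/-- vertex degree vector of an edge-multiset. -/
def Adeg (u : Fin m → ℕ) (j : Fin n) : ℕ := ∑ i, incid e i j * u i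

def AdegF (u : Fin m →₀ ℕ) : Fin n →₀ ℕ :=
  Finsupp.equivFunOnFinite.symm (Adeg e u)

lemma AdegF_apply (u : Fin m →₀ ℕ) (j : Fin n) : AdegF e u j = ∑ i, incid e i j * u i := rfl

lemma toricMap_monomial (K : Type*) [CommRing K] (u : Fin m →₀ ℕ) :
    toricMap K e (monomial u 1) = monomial (AdegF e u) 1 := by
  rw [toricMap, aeval_monomial, map_one, one_mul]
  rw [Finsupp.prod_fintype _ _ (fun i => pow_zero _)]
  rw [monomial_eq, map_one, one_mul, Finsupp.prod_fintype _ _ (fun j => pow_zero _)]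
  simp only [AdegF_apply, ← Finset.prod_pow, ← pow_mul]
  rw [Finset.prod_comm]
  refine Finset.prod_congr rfl fun j _ => ?_
  rw [Finset.prod_pow_eq_pow_sum]

lemma monomial_sub_mem_toricIdeal (K : Type*) [CommRing K] {a b : Fin m →₀ ℕ}
    (h : AdegF e a = AdegF e b) :
    (monomial a 1 - monomial b 1 : MvPolynomial (Fin m) K) ∈ toricIdeal K e := by
  simp only [toricIdeal, RingHom.mem_ker, map_sub, toricMap_monomial, h, sub_self]

lemma adegF_eq_of_mem {K : Type*} [Field K] {a b : Fin m →₀ ℕ} (hab : a ≠ b)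
    (h : (monomial a 1 - monomial b 1 : MvPolynomial (Fin m) K) ∈ toricIdeal K e) :
    AdegF e a = AdegF e b := by
  simp only [toricIdeal, RingHom.mem_ker, map_sub, toricMap_monomial, sub_eq_zero] at h
  by_contra hne
  have := (congrArg (coeff (AdegF e a)) h)
  rw [coeff_monomial, coeff_monomial, if_pos rfl, if_neg (fun hc => hne hc.symm)] at this
  exact one_ne_zero this

end TP
namespace TP
open MvPolynomial Finset

variable {n m : ℕ} (e : Fin m → Sym2 (Fin n))

lemma sum_incid (hl : ∀ i, ¬ (e i).IsDiag) (i : Fin m) : ∑ j, incid e i j = 2 := by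
  obtain ⟨x, y, hxy⟩ : ∃ x y, e i = s(x, y) := by
    obtain ⟨⟨x, y⟩, h⟩ := Quot.exists_rep (e i)
    exact ⟨x, y, h.symm⟩
  have hne : x ≠ y := by
    intro h
    exact hl i (by rw [hxy, h]; exact Sym2.mk_isDiag_iff.mpr rfl)
  have hmem : ∀ j : Fin n, (j ∈ e i) = (j = x ∨ j = y) := by
    intro j; rw [hxy]; simp [Sym2.mem_iff]
  simp only [incid, hmem]
  have hsplit : ∀ j : Fin n, (if j = x ∨ j = y then (1:ℕ) else 0)
      = (if j = x then 1 else 0) + (if j = y then 1 else 0) := by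
    intro j
    by_cases h1 : j = x
    · subst h1; simp [hne, hne.symm]
    · by_cases h2 : j = y <;> simp [h1, h2, Ne.symm hne]
  rw [Finset.sum_congr rfl fun j _ => hsplit j, Finset.sum_add_distrib]
  simp [Finset.sum_ite_eq']

lemma AdegF_add (a b : Fin m →₀ ℕ) : AdegF e (a + b) = AdegF e a + AdegF e b := by
  ext j
  simp [AdegF_apply, Finsupp.add_apply, mul_add, Finset.sum_add_distrib]

lemma sum_AdegF (hl : ∀ i, ¬ (e i).IsDiag) (u : Fin m →₀ ℕ) :
    ∑ j, AdegF e u j = 2 * ∑ i, u i := by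
  simp only [AdegF_apply]
  rw [Finset.sum_comm, Finset.mul_sum]
  refine Finset.sum_congr rfl fun i _ => ?_
  rw [← Finset.sum_mul, sum_incid e hl i]

lemma eq_of_le_of_AdegF_eq (hl : ∀ i, ¬ (e i).IsDiag) {a u : Fin m →₀ ℕ}
    (hle : a ≤ u) (h : AdegF e a = AdegF e u) : a = u := by
  have hsum : ∑ i, a i = ∑ i, u i := by
    have h2 : ∑ j, AdegF e a j = ∑ j, AdegF e u j := by rw [h]
    rw [sum_AdegF e hl, sum_AdegF e hl] at h2
    omega
  have hpt : ∀ i : Fin m, a i ≤ u i := fun i => hle i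
  ext i
  exact (Finset.sum_eq_sum_iff_of_le (fun i _ => hpt i)).mp hsum i (Finset.mem_univ i)

/-- Every exponent in the support of an element of the toric ideal has a partner in the
support with the same multidegree. -/
lemma exists_partner {K : Type*} [Field K] {f : MvPolynomial (Fin m) K}
    (hf : f ∈ toricIdeal K e) {a : Fin m →₀ ℕ} (ha : a ∈ f.support) :
    ∃ b ∈ f.support, b ≠ a ∧ AdegF e b = AdegF e a := by
  have hker : toricMap K e f = 0 := hf
  have hco : coeff (AdegF e a) (toricMap K e f) = 0 := by rw [hker]; simp
  have hrw : toricMap K e f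
      = ∑ w ∈ f.support, (coeff w f) • (monomial (AdegF e w) 1 : MvPolynomial (Fin n) K) := by
    conv_lhs => rw [f.as_sum]
    rw [map_sum]
    refine Finset.sum_congr rfl fun w _ => ?_
    have h1 : (monomial w) (coeff w f) = (coeff w f) • (monomial w 1 : MvPolynomial (Fin m) K) := by
      rw [smul_monomial, smul_eq_mul, mul_one]
    rw [h1, map_smul, toricMap_monomial]
  rw [hrw] at hco
  simp only [coeff_sum, coeff_smul, coeff_monomial, smul_eq_mul, mul_ite, mul_one, mul_zero] at hco
  by_contra hall
  push_neg at hall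
  have hsum : ∑ w ∈ f.support, (if AdegF e w = AdegF e a then coeff w f else 0) = coeff a f := by
    rw [Finset.sum_eq_single_of_mem a ha]
    · rw [if_pos rfl]
    · intro b hb hba
      by_cases hd : AdegF e b = AdegF e a
      · exact absurd hd (hall b hb hba)
      · rw [if_neg hd]
  rw [hsum] at hco
  exact (mem_support_iff.mp ha) hco

lemma span_eq_toricIdeal {K : Type*} [Field K] (S : Set (MvPolynomial (Fin m) K))
    (hS : S ⊆ (toricIdeal K e : Set (MvPolynomial (Fin m) K)))
    (hgen : ∀ a b : Fin m →₀ ℕ, a ≠ b → AdegF e a = AdegF e b →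
      (monomial a 1 - monomial b 1 : MvPolynomial (Fin m) K) ∈ Ideal.span S) :
    Ideal.span S = toricIdeal K e := by
  refine le_antisymm (Ideal.span_le.mpr hS) ?_
  intro f hf
  generalize hN : f.support.card = N
  induction N using Nat.strong_induction_on generalizing f with
  | _ N ih =>
    rcases Nat.eq_zero_or_pos N with h0 | hpos
    · subst h0
      have : f = 0 := by
        rwa [Finset.card_eq_zero, MvPolynomial.support_eq_empty] at hN
      simp [this]
    · have hne : f.support.Nonempty := by
        rw [← Finset.card_pos, hN]; exact hpos
      obtain ⟨a, ha⟩ := hne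
      obtain ⟨b, hb, hba, hdeg⟩ := exists_partner e hf ha
      set c := coeff a f with hc
      set q : MvPolynomial (Fin m) K := monomial a 1 - monomial b 1 with hq
      set g := f - C c * q with hg
      have hqI : q ∈ toricIdeal K e := monomial_sub_mem_toricIdeal e K hdeg.symm
      have hgI : g ∈ toricIdeal K e := Ideal.sub_mem _ hf (Ideal.mul_mem_left _ _ hqI)
      have hsupp : g.support ⊆ f.support.erase a := by
        intro w hw
        rw [mem_support_iff] at hw
        have hcw : coeff w g = coeff w f -
            ((if a = w then c else 0) - (if b = w then c else 0)) := by
          rw [hg, hq, coeff_sub, mul_sub, C_mul_monomial, C_mul_monomial, mul_one,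
            coeff_sub, coeff_monomial, coeff_monomial]
        rw [Finset.mem_erase]
        constructor
        · intro hwa
          subst hwa
          rw [if_pos rfl, if_neg hba] at hcw
          simp [hcw, hc] at hw
        · rw [mem_support_iff]
          by_cases hwb : w = b
          · subst hwb; exact mem_support_iff.mp hb
          · by_cases hwa : a = w
            · subst hwa
              rw [if_pos rfl, if_neg hba] at hcw
              simp [hcw, hc] at hw
            · rw [if_neg hwa, if_neg (fun h => hwb h.symm)] at hcw
              simpa [hcw] using hw
      have hcard : g.support.card < N := by
        calc g.support.card ≤ (f.support.erase a).card := Finset.card_le_card hsupp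
        _ < f.support.card := Finset.card_erase_lt_of_mem ha
        _ = N := hN
      have hgspan : g ∈ Ideal.span S := ih _ hcard hgI rfl
      have : f = g + C c * q := by rw [hg]; ring
      rw [this]
      exact Ideal.add_mem _ hgspan
        (Ideal.mul_mem_left _ _ (hgen a b (fun h => hba h.symm) hdeg.symm))

end TP
namespace TP
open MvPolynomial Finset

variable {n m : ℕ} (e : Fin m → Sym2 (Fin n))

/-- the fiber of `u` is nontrivial -/
def Ntriv (u : Fin m →₀ ℕ) : Prop := ∃ b : Fin m →₀ ℕ, b ≠ u ∧ AdegF e b = AdegF e u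

/-- combinatorial characterization of indispensability -/
def Good (u : Fin m →₀ ℕ) : Prop :=
  Ntriv e u ∧ ∀ a : Fin m →₀ ℕ, a ≤ u → a ≠ u → ¬ Ntriv e a

lemma good_indisp {K : Type*} [Field K] {u : Fin m →₀ ℕ} (hg : Good e u) :
    IndispensableMonomial (toricIdeal K e) u := by
  intro S hSbin hSspan
  obtain ⟨b, hbu, hdeg⟩ := hg.1
  have hmem : (monomial u 1 - monomial b 1 : MvPolynomial (Fin m) K) ∈ Ideal.span S := by
    rw [hSspan]; exact monomial_sub_mem_toricIdeal e K hdeg.symm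
  obtain ⟨c, hcsupp, hcsum⟩ := Submodule.mem_span_set.mp hmem
  have hco : coeff u (monomial u 1 - monomial b 1 : MvPolynomial (Fin m) K) = 1 := by
    rw [coeff_sub, coeff_monomial, coeff_monomial, if_pos rfl, if_neg hbu, sub_zero]
  rw [← hcsum] at hco
  rw [Finsupp.sum, coeff_sum] at hco
  have hex : ∃ p ∈ c.support, coeff u (c p • p) ≠ 0 := by
    by_contra hall
    push_neg at hall
    rw [Finset.sum_eq_zero hall] at hco
    exact one_ne_zero hco.symm
  obtain ⟨p, hpc, hpco⟩ := hex
  have hpS : p ∈ S := hcsupp hpc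
  obtain ⟨α, β, hp⟩ := hSbin p hpS
  have hpI : p ∈ toricIdeal K e := by
    rw [← hSspan]; exact Ideal.subset_span hpS
  by_cases hαβ : α = β
  · exfalso
    rw [hp, hαβ, sub_self, smul_zero] at hpco
    simp at hpco
  have hAd : AdegF e α = AdegF e β := adegF_eq_of_mem e hαβ (hp ▸ hpI)
  set g := c p with hgdef
  rw [hp, smul_eq_mul, mul_sub, coeff_sub, coeff_mul_monomial', coeff_mul_monomial'] at hpco
  have hcases : (α ≤ u ∧ coeff (u - α) g ≠ 0) ∨ (β ≤ u ∧ coeff (u - β) g ≠ 0) := by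
    by_cases h1 : α ≤ u
    · by_cases h2 : β ≤ u
      · by_cases h3 : coeff (u - α) g ≠ 0
        · exact Or.inl ⟨h1, h3⟩
        · push_neg at h3
          refine Or.inr ⟨h2, fun h4 => ?_⟩
          rw [if_pos h1, if_pos h2, h3, h4] at hpco
          simp at hpco
      · rw [if_pos h1, if_neg h2, sub_zero, mul_one] at hpco
        exact Or.inl ⟨h1, hpco⟩
    · by_cases h2 : β ≤ u
      · rw [if_neg h1, if_pos h2, zero_sub, mul_one] at hpco
        exact Or.inr ⟨h2, fun h4 => hpco (by rw [h4, neg_zero])⟩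
      · rw [if_neg h1, if_neg h2, sub_zero] at hpco
        exact absurd rfl hpco
  rcases hcases with ⟨hle, _⟩ | ⟨hle, _⟩
  · have hαu : α = u := by
      by_contra hne
      exact hg.2 α hle hne ⟨β, Ne.symm hαβ, hAd.symm⟩
    exact ⟨p, hpS, β, Or.inl (by rw [hp, hαu])⟩
  · have hβu : β = u := by
      by_contra hne
      exact hg.2 β hle hne ⟨α, hαβ, hAd⟩
    exact ⟨p, hpS, α, Or.inr (by rw [hp, hβu])⟩

lemma notgood_notindisp {K : Type*} [Field K] (hl : ∀ i, ¬ (e i).IsDiag) {u : Fin m →₀ ℕ}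
    (hg : ¬ Good e u) : ¬ IndispensableMonomial (toricIdeal K e) u := by
  intro hind
  set Su : Set (MvPolynomial (Fin m) K) :=
    {p | ∃ a b : Fin m →₀ ℕ, a ≠ b ∧ a ≠ u ∧ b ≠ u ∧ AdegF e a = AdegF e b ∧
      p = monomial a 1 - monomial b 1} with hSu
  have hbin : ∀ p ∈ Su, IsBinomial p := by
    rintro p ⟨a, b, _, _, _, _, hp⟩
    exact ⟨a, b, hp⟩
  have hsub : Su ⊆ (toricIdeal K e : Set (MvPolynomial (Fin m) K)) := by
    rintro p ⟨a, b, _, _, _, hd, hp⟩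
    rw [hp]
    exact monomial_sub_mem_toricIdeal e K hd
  have hhelp : ∀ b : Fin m →₀ ℕ, b ≠ u → AdegF e b = AdegF e u →
      (monomial u 1 - monomial b 1 : MvPolynomial (Fin m) K) ∈ Ideal.span Su := by
    intro b hbu hdeg
    by_cases hNt : Ntriv e u
    swap
    · exact absurd ⟨b, hbu, hdeg⟩ hNt
    have hbad : ∃ a₀ : Fin m →₀ ℕ, a₀ ≤ u ∧ a₀ ≠ u ∧ Ntriv e a₀ := by
      by_contra hall
      push_neg at hall
      exact hg ⟨hNt, fun a hle hne => hall a hle hne⟩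
    obtain ⟨a₀, hle, hne, b₀, hb₀ne, hb₀deg⟩ := hbad
    have hb₀u : b₀ ≠ u := by
      intro h
      subst h
      exact hne (eq_of_le_of_AdegF_eq e hl hle hb₀deg.symm)
    have hgen1 : (monomial a₀ 1 - monomial b₀ 1 : MvPolynomial (Fin m) K) ∈ Su :=
      ⟨a₀, b₀, Ne.symm hb₀ne, hne, hb₀u, hb₀deg.symm, rfl⟩
    have hcancel : u - a₀ + a₀ = u := tsub_add_cancel_of_le hle
    set u' := u - a₀ + b₀ with hu'
    have hkey : (monomial u 1 - monomial b 1 : MvPolynomial (Fin m) K)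
        = monomial (u - a₀) 1 * (monomial a₀ 1 - monomial b₀ 1)
          + (monomial u' 1 - monomial b 1) := by
      rw [mul_sub, monomial_mul, monomial_mul, hcancel, mul_one, hu']
      ring
    have hterm2 : (monomial u' 1 - monomial b 1 : MvPolynomial (Fin m) K) ∈ Ideal.span Su := by
      by_cases hub : u' = b
      · rw [hub, sub_self]; exact Ideal.zero_mem _
      · refine Ideal.subset_span ⟨u', b, hub, ?_, hbu, ?_, rfl⟩
        · intro h
          rw [hu'] at h
          nth_rewrite 2 [← hcancel] at h
          exact hb₀ne (add_left_cancel h)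
        · have : AdegF e u' = AdegF e u := by
            rw [hu', AdegF_add, hb₀deg, ← AdegF_add, hcancel]
          rw [this, hdeg]
    rw [hkey]
    exact Ideal.add_mem _ (Ideal.mul_mem_left _ _ (Ideal.subset_span hgen1)) hterm2
  have hspan : Ideal.span Su = toricIdeal K e := by
    refine span_eq_toricIdeal e Su hsub ?_
    intro a b hab hd
    by_cases hau : a = u
    · rw [hau]
      have h2 : AdegF e b = AdegF e u := by rw [← hau]; exact hd.symm
      exact hhelp b (fun h => hab (hau.trans h.symm)) h2
    · by_cases hbu : b = u
      · have hrw : (monomial a 1 - monomial b 1 : MvPolynomial (Fin m) K)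
            = -(monomial u 1 - monomial a 1) := by rw [hbu]; ring
        rw [hrw]
        exact neg_mem (hhelp a hau (by rw [← hbu]; exact hd))
      · exact Ideal.subset_span ⟨a, b, hab, hau, hbu, hd, rfl⟩
  obtain ⟨p, hpS, v, hcase⟩ := hind Su hbin hspan
  obtain ⟨a, b, hab, hau, hbu, hd, hp⟩ := hpS
  have hcoeffu : coeff u p = 0 := by
    rw [hp, coeff_sub, coeff_monomial, coeff_monomial, if_neg hau, if_neg hbu, sub_zero]
  rcases hcase with hpe | hpe
  · by_cases hvu : v = u
    · rw [hvu, sub_self] at hpe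
      rw [hpe] at hp
      have : (monomial a 1 : MvPolynomial (Fin m) K) = monomial b 1 := by
        rw [← sub_eq_zero]; exact hp.symm
      rw [monomial_eq_monomial_iff] at this
      rcases this with ⟨h1, _⟩ | ⟨h1, _⟩
      · exact hab h1
      · exact one_ne_zero h1
    · rw [hpe, coeff_sub, coeff_monomial, coeff_monomial, if_pos rfl, if_neg hvu,
        sub_zero] at hcoeffu
      exact one_ne_zero hcoeffu
  · by_cases hvu : v = u
    · rw [hvu, sub_self] at hpe
      rw [hpe] at hp
      have : (monomial a 1 : MvPolynomial (Fin m) K) = monomial b 1 := by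
        rw [← sub_eq_zero]; exact hp.symm
      rw [monomial_eq_monomial_iff] at this
      rcases this with ⟨h1, _⟩ | ⟨h1, _⟩
      · exact hab h1
      · exact one_ne_zero h1
    · rw [hpe, coeff_sub, coeff_monomial, coeff_monomial, if_pos rfl, if_neg hvu] at hcoeffu
      simp at hcoeffu

end TP
namespace TP
open Finset

variable {n m : ℕ} (e : Fin m → Sym2 (Fin n))

lemma kernel_filter (v : Fin m → ℤ) (j : Fin n) :
    ∑ i, (incid e i j : ℤ) * v i = ∑ i ∈ univ.filter (fun i => j ∈ e i), v i := by
  rw [Finset.sum_filter]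
  refine Finset.sum_congr rfl fun i _ => ?_
  by_cases h : j ∈ e i <;> simp [incid, h]

lemma exists_neg_at {v : Fin m → ℤ} (hker : ∀ j, ∑ i, (incid e i j : ℤ) * v i = 0)
    (y : Fin n) (i : Fin m) (hy : y ∈ e i) (hpos : 0 < v i) :
    ∃ i', y ∈ e i' ∧ v i' < 0 := by
  by_contra hno
  push_neg at hno
  have hsum : ∑ i' ∈ univ.filter (fun i' => y ∈ e i'), v i' = 0 := by
    rw [← kernel_filter]; exact hker y
  have hpos' : 0 < ∑ i' ∈ univ.filter (fun i' => y ∈ e i'), v i' := by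
    refine Finset.sum_pos' (fun i' hi' => ?_) ⟨i, ?_, hpos⟩
    · exact hno i' (Finset.mem_filter.mp hi').2
    · exact Finset.mem_filter.mpr ⟨Finset.mem_univ i, hy⟩
  omega

lemma exists_pos_at {v : Fin m → ℤ} (hker : ∀ j, ∑ i, (incid e i j : ℤ) * v i = 0)
    (y : Fin n) (i : Fin m) (hy : y ∈ e i) (hneg : v i < 0) :
    ∃ i', y ∈ e i' ∧ 0 < v i' := by
  have hker' : ∀ j, ∑ i, (incid e i j : ℤ) * (-v) i = 0 := by
    intro j
    have := hker j
    simp only [Pi.neg_apply, mul_neg, Finset.sum_neg_distrib]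
    omega
  obtain ⟨i', hmem, hlt⟩ := exists_neg_at e hker' y i hy (by simpa using hneg)
  exact ⟨i', hmem, by simpa using hlt⟩

/-- data for one position of the alternating walk -/
structure WDat (e : Fin m → Sym2 (Fin n)) (v : Fin m → ℤ) : Type where
  x : Fin n
  i : Fin m
  hx : x ∈ e i
  hv : v i ≠ 0

lemma step_exists {v : Fin m → ℤ} (hker : ∀ j, ∑ i, (incid e i j : ℤ) * v i = 0)
    (d : WDat e v) : ∃ i' : Fin m, (Sym2.Mem.other d.hx) ∈ e i' ∧ v i' ≠ 0 ∧
      ((0 < v d.i → v i' < 0) ∧ (v d.i < 0 → 0 < v i')) := by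
  have hy : Sym2.Mem.other d.hx ∈ e d.i := Sym2.other_mem d.hx
  rcases lt_trichotomy (v d.i) 0 with hneg | h0 | hpos
  · obtain ⟨i', h1, h2⟩ := exists_pos_at e hker _ d.i hy hneg
    exact ⟨i', h1, ne_of_gt h2, fun h => absurd h (by omega), fun _ => h2⟩
  · exact absurd h0 d.hv
  · obtain ⟨i', h1, h2⟩ := exists_neg_at e hker _ d.i hy hpos
    exact ⟨i', h1, ne_of_lt h2, fun _ => h2, fun h => absurd h (by omega)⟩

noncomputable def nxt {v : Fin m → ℤ} (hker : ∀ j, ∑ i, (incid e i j : ℤ) * v i = 0)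
    (d : WDat e v) : WDat e v :=
  ⟨Sym2.Mem.other d.hx, Classical.choose (step_exists e hker d),
    (Classical.choose_spec (step_exists e hker d)).1,
    (Classical.choose_spec (step_exists e hker d)).2.1⟩

lemma nxt_sign {v : Fin m → ℤ} (hker : ∀ j, ∑ i, (incid e i j : ℤ) * v i = 0) (d : WDat e v) :
    (0 < v d.i → v ((nxt e hker d).i) < 0) ∧ (v d.i < 0 → 0 < v ((nxt e hker d).i)) :=
  (Classical.choose_spec (step_exists e hker d)).2.2

lemma nxt_edge {v : Fin m → ℤ} (hker : ∀ j, ∑ i, (incid e i j : ℤ) * v i = 0) (d : WDat e v) :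
    e d.i = s(d.x, (nxt e hker d).x) :=
  (Sym2.other_spec d.hx).symm

noncomputable def walk {v : Fin m → ℤ} (hker : ∀ j, ∑ i, (incid e i j : ℤ) * v i = 0)
    (d₀ : WDat e v) : ℕ → WDat e v
  | 0 => d₀
  | (l+1) => nxt e hker (walk hker d₀ l)

end TP
namespace TP
open Finset

variable {n m : ℕ} (e : Fin m → Sym2 (Fin n))

section Walk

variable {v : Fin m → ℤ} (hker : ∀ j, ∑ i, (incid e i j : ℤ) * v i = 0) (d₀ : WDat e v)

lemma walk_edge (l : ℕ) :
    e ((walk e hker d₀ l).i) = s((walk e hker d₀ l).x, (walk e hker d₀ (l+1)).x) :=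
  nxt_edge e hker _

lemma walk_sign (l : ℕ) :
    (0 < v ((walk e hker d₀ l).i) → v ((walk e hker d₀ (l+1)).i) < 0) ∧
    (v ((walk e hker d₀ l).i) < 0 → 0 < v ((walk e hker d₀ (l+1)).i)) :=
  nxt_sign e hker _

lemma walk_ne (hl : ∀ i, ¬ (e i).IsDiag) (l : ℕ) :
    (walk e hker d₀ (l+1)).x ≠ (walk e hker d₀ l).x :=
  Sym2.other_ne (hl _) _

lemma walk_sign_flip (l : ℕ) :
    (0 < v ((walk e hker d₀ (l+1)).i)) ↔ ¬ (0 < v ((walk e hker d₀ l).i)) := by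
  obtain ⟨h1, h2⟩ := walk_sign e hker d₀ l
  constructor
  · intro hp h0
    have := h1 h0
    omega
  · intro hnp
    exact h2 (lt_of_le_of_ne (le_of_not_gt hnp) ((walk e hker d₀ l).hv))

lemma walk_sign_parity (l : ℕ) :
    (0 < v ((walk e hker d₀ l).i)) ↔ ((0 < v ((walk e hker d₀ 0).i)) ↔ Even l) := by
  induction l with
  | zero => simp
  | succ l ih =>
    rw [walk_sign_flip e hker d₀ l, ih, Nat.even_add_one]
    tauto

lemma walk_side_parity {A : Set (Fin n)}
    (hbipA : ∀ i : Fin m, ∀ x y : Fin n, e i = s(x, y) → ((x ∈ A ∧ y ∉ A) ∨ (x ∉ A ∧ y ∈ A)))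
    (l : ℕ) :
    ((walk e hker d₀ l).x ∈ A) ↔ (((walk e hker d₀ 0).x ∈ A) ↔ Even l) := by
  induction l with
  | zero => simp
  | succ l ih =>
    have hflip : ((walk e hker d₀ (l+1)).x ∈ A) ↔ ¬ ((walk e hker d₀ l).x ∈ A) := by
      rcases hbipA _ _ _ (walk_edge e hker d₀ l) with ⟨h1, h2⟩ | ⟨h1, h2⟩ <;> tauto
    rw [hflip, ih, Nat.even_add_one]
    tauto

end Walk

lemma parity_helper1 {P Q R Sa Sb : Prop} (ha : Sa ↔ (R ↔ P)) (hb : Sb ↔ (R ↔ Q))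
    (hpar : ¬ (P ↔ Q)) : Sa ↔ ¬ Sb := by tauto

lemma parity_helper2 {P Q R S : Prop} (h1 : S ↔ (R ↔ P)) (h2 : S ↔ (R ↔ Q)) : P ↔ Q := by
  tauto

lemma sign_pair {a b : ℤ} (ha : a ≠ 0) (hb : b ≠ 0) (h : (0 < a) ↔ ¬ (0 < b)) :
    Int.sign a + Int.sign b = 0 := by
  rcases lt_trichotomy a 0 with h1 | h1 | h1 <;> rcases lt_trichotomy b 0 with h2 | h2 | h2 <;>
    first
      | omega
      | (rw [Int.sign_eq_one_of_pos (by omega), Int.sign_eq_neg_one_of_neg (by omega)]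
         ring)
      | (rw [Int.sign_eq_neg_one_of_neg (by omega), Int.sign_eq_one_of_pos (by omega)]
         ring)

lemma sign_sq {a : ℤ} (ha : a ≠ 0) : Int.sign a * Int.sign a = 1 := by
  rcases lt_trichotomy a 0 with h1 | h1 | h1
  · rw [Int.sign_eq_neg_one_of_neg h1]; ring
  · omega
  · rw [Int.sign_eq_one_of_pos h1]; ring

end TP
namespace TP
open Finset

variable {n m : ℕ}

theorem exists_good_circuit (e : Fin m → Sym2 (Fin n)) (he : Function.Injective e)
    (hl : ∀ i, ¬ (e i).IsDiag) (hbip : IsBipartite e) {v : Fin m → ℤ} (hv : v ≠ 0)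
    (hker : ∀ j, ∑ i, (incid e i j : ℤ) * v i = 0) :
    ∃ w : Fin m → ℤ,
      (∀ j, ∑ i, (incid e i j : ℤ) * w i = 0) ∧
      (∀ i, w i = 0 ∨ w i = 1 ∨ w i = -1) ∧
      (∀ i, w i = 1 → 0 < v i) ∧ (∀ i, w i = -1 → v i < 0) ∧
      (∃ i, w i = 1) ∧ (∃ i, w i = -1) ∧
      (∀ v' : Fin m → ℤ, (∀ j, ∑ i, (incid e i j : ℤ) * v' i = 0) →
        (∀ i, w i = 0 → v' i = 0) → ∃ c : ℤ, v' = c • w) := by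
  classical
  obtain ⟨i₀, hi₀⟩ : ∃ i, v i ≠ 0 := Function.ne_iff.mp hv
  obtain ⟨x₀, hx₀⟩ : ∃ x, x ∈ e i₀ := by
    obtain ⟨⟨x, y⟩, h⟩ := Quot.exists_rep (e i₀)
    exact ⟨x, by rw [← h]; exact Sym2.mem_mk_left x y⟩
  set W := walk e hker ⟨x₀, i₀, hx₀, hi₀⟩ with hWdef
  have hedge : ∀ l, e ((W l).i) = s((W l).x, (W (l+1)).x) := fun l => walk_edge e hker _ l
  have hsflip : ∀ l, (0 < v ((W (l+1)).i)) ↔ ¬ (0 < v ((W l).i)) :=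
    fun l => walk_sign_flip e hker _ l
  have hspar : ∀ l, (0 < v ((W l).i)) ↔ ((0 < v ((W 0).i)) ↔ Even l) :=
    fun l => walk_sign_parity e hker _ l
  have hne : ∀ l, (W (l+1)).x ≠ (W l).x := fun l => walk_ne e hker _ hl l
  obtain ⟨A, hA⟩ := hbip
  have hvpar : ∀ l, ((W l).x ∈ A) ↔ (((W 0).x ∈ A) ↔ Even l) :=
    fun l => walk_side_parity e hker _ hA l
  -- pigeonhole: some vertex repeats
  have hex : ∃ k : ℕ, ∃ l, l < k ∧ (W l).x = (W k).x := by
    have hcard : Fintype.card (Fin n) < Fintype.card (Fin (n + 1)) := by simp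
    obtain ⟨a, b, hab, heq⟩ :=
      Fintype.exists_ne_map_eq_of_card_lt (fun l : Fin (n + 1) => (W (l : ℕ)).x) hcard
    rcases lt_or_gt_of_ne (fun h : (a : ℕ) = (b : ℕ) => hab (Fin.ext h)) with h | h
    · exact ⟨b, a, h, heq⟩
    · exact ⟨a, b, h, heq.symm⟩
  set K := Nat.find hex with hKdef
  obtain ⟨I, hIK, hVIK⟩ : ∃ l, l < K ∧ (W l).x = (W K).x := Nat.find_spec hex
  have hvinj : ∀ a b, a < K → b < K → (W a).x = (W b).x → a = b := by
    intro a b haK hbK heq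
    by_contra hab
    rcases lt_or_gt_of_ne hab with h | h
    · exact Nat.find_min hex hbK ⟨a, h, heq⟩
    · exact Nat.find_min hex haK ⟨b, h, heq.symm⟩
  -- parity of I and K agree
  have hIKpar : Even I ↔ Even K := by
    have h1 := hvpar I
    have h2 := hvpar K
    rw [hVIK] at h1
    exact parity_helper2 h1 h2
  -- K ≥ I + 3
  have hK1 : K ≠ I + 1 := by
    intro h
    exact hne I (by rw [← h]; exact hVIK.symm)
  have hK2 : K ≠ I + 2 := by
    intro h
    have he1 : e ((W I).i) = e ((W (I+1)).i) := by
      rw [hedge I, hedge (I+1)]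
      have : (W (I + 1 + 1)).x = (W I).x := by
        rw [← h]; exact hVIK.symm
      rw [this, Sym2.eq_swap]
    have heq := he he1
    have hs := hsflip I
    rw [← heq] at hs
    exact iff_not_self hs
  have hK3 : I + 3 ≤ K := by omega
  -- the cycle
  set Cyc : Finset (Fin m) := (Finset.Ico I K).image (fun l => (W l).i) with hCyc
  set w : Fin m → ℤ := fun i => if i ∈ Cyc then Int.sign (v i) else 0 with hwdef
  have hmemCyc : ∀ i, i ∈ Cyc ↔ ∃ l, (I ≤ l ∧ l < K) ∧ (W l).i = i := by
    intro i
    rw [hCyc, Finset.mem_image]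
    simp [Finset.mem_Ico]
  have hCv : ∀ i ∈ Cyc, v i ≠ 0 := by
    intro i hi
    obtain ⟨l, _, rfl⟩ := (hmemCyc i).mp hi
    exact (W l).hv
  -- edge indices on the cycle are pairwise distinct
  have hEinj : ∀ a b, I ≤ a → a < K → I ≤ b → b < K → (W a).i = (W b).i → a = b := by
    have core : ∀ a b, I ≤ a → a < K → I ≤ b → b < K → a < b → (W a).i = (W b).i → False := by
      intro a b hIa haK hIb hbK hab heq
      have he1 : s((W a).x, (W (a+1)).x) = s((W b).x, (W (b+1)).x) := by
        rw [← hedge a, ← hedge b, heq]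
      rw [Sym2.eq_iff] at he1
      rcases he1 with ⟨h1, _⟩ | ⟨h1, h2⟩
      · exact absurd (hvinj a b haK hbK h1) (by omega)
      · -- h1 : (W a).x = (W (b+1)).x, h2 : (W (a+1)).x = (W b).x
        have hab1 : a + 1 = b := by
          rcases Nat.lt_or_ge (a+1) b with h | h
          · exact absurd (hvinj (a+1) b (by omega) hbK h2) (by omega)
          · omega
        subst hab1
        -- h1 : (W a).x = (W (a+2)).x
        rcases Nat.lt_or_ge (a + 2) K with h | h
        · exact absurd (hvinj a (a+2) (by omega) h h1) (by omega)
        · have hKa2 : a + 2 = K := by omega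
          have hxa : (W a).x = (W I).x := by
            rw [h1, hKa2, ← hVIK]
          have : a = I := hvinj a I haK hIK hxa
          omega
    intro a b hIa haK hIb hbK heq
    rcases lt_trichotomy a b with h | h | h
    · exact absurd (core a b hIa haK hIb hbK h heq) (fun x => x)
    · exact h
    · exact absurd (core b a hIb hbK hIa haK h heq.symm) (fun x => x)
  -- incidence filters
  have hup : ∀ l, I ≤ l → l + 1 < K → True := fun _ _ _ => trivial
  have hT1 : ∀ c, I < c → c < K →
      (Finset.Ico I K).filter (fun l => (W c).x ∈ e ((W l).i)) = {c - 1, c} := by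
    intro c hIc hcK
    ext l
    simp only [Finset.mem_filter, Finset.mem_Ico, Finset.mem_insert, Finset.mem_singleton]
    constructor
    · rintro ⟨⟨hIl, hlK⟩, hmem⟩
      rw [hedge l, Sym2.mem_iff] at hmem
      rcases hmem with h | h
      · right; exact (hvinj c l hcK hlK h).symm
      · rcases Nat.lt_or_ge (l+1) K with h' | h'
        · have := hvinj c (l+1) hcK h' h
          omega
        · have hlK1 : l + 1 = K := by omega
          have : (W c).x = (W I).x := by rw [h, hlK1, ← hVIK]
          have := hvinj c I hcK hIK this
          omega
    · intro hl'
      have hc1 : c - 1 + 1 = c := by omega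
      rcases hl' with h | h
      · subst h
        refine ⟨⟨by omega, by omega⟩, ?_⟩
        rw [hedge (c-1), hc1, Sym2.mem_iff]
        right; rfl
      · subst h
        exact ⟨⟨by omega, hcK⟩, (W l).hx⟩
  have hT2 : (Finset.Ico I K).filter (fun l => (W I).x ∈ e ((W l).i)) = {I, K - 1} := by
    ext l
    simp only [Finset.mem_filter, Finset.mem_Ico, Finset.mem_insert, Finset.mem_singleton]
    constructor
    · rintro ⟨⟨hIl, hlK⟩, hmem⟩
      rw [hedge l, Sym2.mem_iff] at hmem
      rcases hmem with h | h
      · left; exact (hvinj I l hIK hlK h).symm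
      · rcases Nat.lt_or_ge (l+1) K with h' | h'
        · have := hvinj I (l+1) hIK h' h
          omega
        · right; omega
    · intro hl'
      have hK0 : K - 1 + 1 = K := by omega
      rcases hl' with h | h
      · subst h
        exact ⟨⟨le_refl l, hIK⟩, (W l).hx⟩
      · subst h
        refine ⟨⟨by omega, by omega⟩, ?_⟩
        rw [hedge (K-1), hK0, Sym2.mem_iff]
        right; exact hVIK
  have hT0 : ∀ j : Fin n, (∀ c, I ≤ c → c < K → j ≠ (W c).x) →
      (Finset.Ico I K).filter (fun l => j ∈ e ((W l).i)) = ∅ := by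
    intro j hj
    rw [Finset.filter_eq_empty_iff]
    rintro l hl
    rw [Finset.mem_Ico] at hl
    rw [hedge l, Sym2.mem_iff]
    push_neg
    refine ⟨hj l hl.1 hl.2, ?_⟩
    rcases Nat.lt_or_ge (l+1) K with h' | h'
    · exact hj (l+1) (by omega) h'
    · have hlK1 : l + 1 = K := by omega
      rw [hlK1, ← hVIK]
      exact hj I (le_refl I) hIK
  -- vertex sums for functions supported on the cycle
  have hSum : ∀ (u' : Fin m → ℤ), (∀ i, i ∉ Cyc → u' i = 0) → ∀ j : Fin n,
      ∑ i, (incid e i j : ℤ) * u' i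
        = ∑ l ∈ (Finset.Ico I K).filter (fun l => j ∈ e ((W l).i)), u' ((W l).i) := by
    intro u' hu' j
    rw [kernel_filter]
    have hsub : Cyc.filter (fun i => j ∈ e i) ⊆ univ.filter (fun i => j ∈ e i) := by
      intro i hi
      rw [Finset.mem_filter] at hi ⊢
      exact ⟨Finset.mem_univ i, hi.2⟩
    have hzero : ∀ i ∈ univ.filter (fun i => j ∈ e i),
        i ∉ Cyc.filter (fun i => j ∈ e i) → u' i = 0 := by
      intro i hi hni
      rw [Finset.mem_filter] at hi
      refine hu' i fun hic => hni (Finset.mem_filter.mpr ⟨hic, hi.2⟩)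
    rw [← Finset.sum_subset hsub hzero]
    have himg : Cyc.filter (fun i => j ∈ e i)
        = ((Finset.Ico I K).filter (fun l => j ∈ e ((W l).i))).image (fun l => (W l).i) := by
      ext i
      simp only [Finset.mem_filter, Finset.mem_image, hCyc, Finset.mem_Ico]
      constructor
      · rintro ⟨⟨l, hl, rfl⟩, hmem⟩
        exact ⟨l, ⟨hl, hmem⟩, rfl⟩
      · rintro ⟨l, ⟨hl, hmem⟩, rfl⟩
        exact ⟨⟨l, hl, rfl⟩, hmem⟩
    rw [himg]
    rw [Finset.sum_image]
    intro a ha b hb heq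
    rw [Finset.mem_coe, Finset.mem_filter, Finset.mem_Ico] at ha hb
    exact hEinj a b ha.1.1 ha.1.2 hb.1.1 hb.1.2 heq
  -- signs around the cycle
  have hwCyc : ∀ l, I ≤ l → l < K → w ((W l).i) = Int.sign (v ((W l).i)) := by
    intro l h1 h2
    rw [hwdef]
    simp only
    rw [if_pos ((hmemCyc _).mpr ⟨l, ⟨h1, h2⟩, rfl⟩)]
  have hwpair : ∀ a b, I ≤ a → a < K → I ≤ b → b < K → ¬ (Even a ↔ Even b) →
      w ((W a).i) + w ((W b).i) = 0 := by
    intro a b h1 h2 h3 h4 hpar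
    rw [hwCyc a h1 h2, hwCyc b h3 h4]
    refine sign_pair ((W a).hv) ((W b).hv) ?_
    exact parity_helper1 (hspar a) (hspar b) hpar
  -- w is in the kernel
  have hwker : ∀ j, ∑ i, (incid e i j : ℤ) * w i = 0 := by
    intro j
    have hw0 : ∀ i, i ∉ Cyc → w i = 0 := by
      intro i hi
      rw [hwdef]
      simp only
      rw [if_neg hi]
    rw [hSum w hw0 j]
    by_cases hj : ∃ c, (I ≤ c ∧ c < K) ∧ j = (W c).x
    · obtain ⟨c, ⟨hIc, hcK⟩, rfl⟩ := hj
      rcases Nat.eq_or_lt_of_le hIc with rfl | hIc'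
      · rw [hT2, Finset.sum_pair (by omega : I ≠ K - 1)]
        refine hwpair I (K-1) (le_refl I) hIK (by omega) (by omega) ?_
        have hKK : K - 1 + 1 = K := by omega
        have : Even (K - 1) ↔ ¬ Even K := by
          rw [← hKK, Nat.even_add_one] at *
          tauto
        tauto
      · rw [hT1 c hIc' hcK, Finset.sum_pair (by omega : c - 1 ≠ c)]
        refine hwpair (c-1) c (by omega) (by omega) hIc hcK ?_
        have hcc : c - 1 + 1 = c := by omega
        rw [← hcc, Nat.even_add_one]
        tauto
    · push_neg at hj
      rw [hT0 j (fun c h1 h2 => hj c ⟨h1, h2⟩), Finset.sum_empty]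
  -- conformality and values
  have hw1 : ∀ i, w i = 1 → 0 < v i := by
    intro i h
    rw [hwdef] at h
    simp only at h
    by_cases hi : i ∈ Cyc
    · rw [if_pos hi] at h
      exact Int.sign_eq_one_iff_pos.mp h
    · rw [if_neg hi] at h
      omega
  have hwm1 : ∀ i, w i = -1 → v i < 0 := by
    intro i h
    rw [hwdef] at h
    simp only at h
    by_cases hi : i ∈ Cyc
    · rw [if_pos hi] at h
      exact Int.sign_eq_neg_one_iff_neg.mp h
    · rw [if_neg hi] at h
      omega
  have hwvals : ∀ i, w i = 0 ∨ w i = 1 ∨ w i = -1 := by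
    intro i
    rw [hwdef]
    simp only
    by_cases hi : i ∈ Cyc
    · rw [if_pos hi]
      rcases lt_trichotomy (v i) 0 with h | h | h
      · right; right; exact Int.sign_eq_neg_one_of_neg h
      · left; rw [h]; rfl
      · right; left; exact Int.sign_eq_one_of_pos h
    · left; rw [if_neg hi]
  -- both signs occur
  have hweboth : (∃ i, w i = 1) ∧ (∃ i, w i = -1) := by
    have hI : w ((W I).i) = Int.sign (v ((W I).i)) := hwCyc I (le_refl I) hIK
    have hI1 : w ((W (I+1)).i) = Int.sign (v ((W (I+1)).i)) := hwCyc (I+1) (by omega) (by omega)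
    have hs := hsflip I
    rcases lt_trichotomy (v ((W I).i)) 0 with h | h | h
    · have h2 : 0 < v ((W (I+1)).i) := hs.mpr (by omega)
      constructor
      · exact ⟨(W (I+1)).i, by rw [hI1, Int.sign_eq_one_of_pos h2]⟩
      · exact ⟨(W I).i, by rw [hI, Int.sign_eq_neg_one_of_neg h]⟩
    · exact absurd h (W I).hv
    · have h2 : v ((W (I+1)).i) < 0 := by
        have h3 : ¬ (0 < v ((W (I+1)).i)) := fun hp => (hs.mp hp) h
        have h4 := (W (I+1)).hv
        omega
      constructor
      · exact ⟨(W I).i, by rw [hI, Int.sign_eq_one_of_pos h]⟩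
      · exact ⟨(W (I+1)).i, by rw [hI1, Int.sign_eq_neg_one_of_neg h2]⟩
  -- minimality / propagation
  have hmin : ∀ v' : Fin m → ℤ, (∀ j, ∑ i, (incid e i j : ℤ) * v' i = 0) →
      (∀ i, w i = 0 → v' i = 0) → ∃ c : ℤ, v' = c • w := by
    intro v' hker' hsupp'
    have hv'0 : ∀ i, i ∉ Cyc → v' i = 0 := by
      intro i hi
      refine hsupp' i ?_
      rw [hwdef]; simp only; rw [if_neg hi]
    set c : ℤ := v' ((W I).i) * w ((W I).i) with hcdef
    have hprop : ∀ l, I ≤ l → l < K → v' ((W l).i) = c * w ((W l).i) := by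
      intro l hIl
      induction l, hIl using Nat.le_induction with
      | base =>
        intro _
        have hsq : w ((W I).i) * w ((W I).i) = 1 := by
          rw [hwCyc I (le_refl I) hIK]
          exact sign_sq (W I).hv
        rw [hcdef]
        calc v' ((W I).i) = v' ((W I).i) * (w ((W I).i) * w ((W I).i)) := by rw [hsq]; ring
        _ = v' ((W I).i) * w ((W I).i) * w ((W I).i) := by ring
      | succ l hIl' ih =>
        intro hl1K
        have hlK : l < K := by omega
        have ihl := ih hlK
        -- vertex (W (l+1)).x has exactly the cycle edges l and l+1
        have hl1I : I < l + 1 := by omega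
        have hpairv' : v' ((W l).i) + v' ((W (l+1)).i) = 0 := by
          have := hSum v' hv'0 ((W (l+1)).x)
          rw [hker' _] at this
          rw [hT1 (l+1) hl1I hl1K, Finset.sum_pair (by omega : l + 1 - 1 ≠ l + 1)] at this
          have hll : l + 1 - 1 = l := by omega
          rw [hll] at this
          omega
        have hpairw : w ((W l).i) + w ((W (l+1)).i) = 0 := by
          have := hSum w (fun i hi => by rw [hwdef]; simp only; rw [if_neg hi]) ((W (l+1)).x)
          rw [hwker _] at this
          rw [hT1 (l+1) hl1I hl1K, Finset.sum_pair (by omega : l + 1 - 1 ≠ l + 1)] at this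
          have hll : l + 1 - 1 = l := by omega
          rw [hll] at this
          omega
        have h1 : v' ((W (l+1)).i) = - v' ((W l).i) := by omega
        have h2 : w ((W (l+1)).i) = - w ((W l).i) := by omega
        rw [h1, h2, ihl]
        ring
    refine ⟨c, funext fun i => ?_⟩
    by_cases hi : i ∈ Cyc
    · obtain ⟨l, ⟨h1, h2⟩, rfl⟩ := (hmemCyc i).mp hi
      rw [hprop l h1 h2]
      rfl
    · have hwi : w i = 0 := by rw [hwdef]; simp only; rw [if_neg hi]
      have hsm : (c • w) i = c * w i := rfl
      rw [hsupp' i hwi, hsm, hwi]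
      ring
  exact ⟨w, hwker, hwvals, hw1, hwm1, hweboth.1, hweboth.2, hmin⟩

end TP
namespace TP
open Finset

variable {n m : ℕ} (e : Fin m → Sym2 (Fin n))

/-- an alternating-cycle vector -/
def CycVec (w : Fin m → ℤ) : Prop :=
  (∀ j, ∑ i, (incid e i j : ℤ) * w i = 0) ∧
  (∀ i, w i = 0 ∨ w i = 1 ∨ w i = -1) ∧
  (∃ i, w i = 1) ∧ (∃ i, w i = -1) ∧
  (∀ v' : Fin m → ℤ, (∀ j, ∑ i, (incid e i j : ℤ) * v' i = 0) →
    (∀ i, w i = 0 → v' i = 0) → ∃ c : ℤ, v' = c • w)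

lemma CycVec.neg {w : Fin m → ℤ} (h : CycVec e w) : CycVec e (-w) := by
  obtain ⟨h1, h2, h3, h4, h5⟩ := h
  refine ⟨?_, ?_, ?_, ?_, ?_⟩
  · intro j
    have := h1 j
    simp only [Pi.neg_apply, mul_neg, Finset.sum_neg_distrib]
    omega
  · intro i
    have := h2 i
    simp only [Pi.neg_apply]
    omega
  · obtain ⟨i, hi⟩ := h4
    exact ⟨i, by simp [hi]⟩
  · obtain ⟨i, hi⟩ := h3
    exact ⟨i, by simp [hi]⟩
  · intro v' hker' hsupp'
    obtain ⟨c, hc⟩ := h5 v' hker' (fun i hi => hsupp' i (show -(w i) = 0 by omega))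
    refine ⟨-c, ?_⟩
    rw [hc]
    funext i
    simp only [Pi.smul_apply, Pi.neg_apply, smul_eq_mul]
    ring

lemma CycVec.ne_zero {w : Fin m → ℤ} (h : CycVec e w) : w ≠ 0 := by
  obtain ⟨i, hi⟩ := h.2.2.1
  intro h0
  rw [h0] at hi
  simp at hi

lemma CycVec.isCircuit {w : Fin m → ℤ} (h : CycVec e w) : IsCircuit e w := by
  obtain ⟨h1, h2, h3, h4, h5⟩ := h
  refine ⟨?_, h1, ?_, ?_⟩
  · obtain ⟨i, hi⟩ := h3
    intro h0
    rw [h0] at hi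
    simp at hi
  · intro v' hv' hker' hsub
    obtain ⟨c, hc⟩ := h5 v' hker' (fun i hiw => by
      by_contra hne
      exact (hsub hne) hiw)
    have hc0 : c ≠ 0 := by
      intro h0
      rw [h0] at hc
      simp at hc
      exact hv' hc
    ext i
    simp only [Set.mem_setOf_eq, hc, Pi.smul_apply, smul_eq_mul]
    constructor
    · intro hne h0
      exact hne (by rw [h0, mul_zero])
    · intro hne hmul
      rcases mul_eq_zero.mp hmul with h0 | h0
      · exact hc0 h0
      · exact hne h0
  · obtain ⟨i, hi⟩ := h3
    have hdvd : Finset.univ.gcd w ∣ 1 := by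
      rw [← hi]
      exact Finset.gcd_dvd (Finset.mem_univ i)
    rcases Int.isUnit_iff.mp (isUnit_of_dvd_one hdvd) with hg | hg
    · exact hg
    · exfalso
      have hnorm := Finset.normalize_gcd (s := (Finset.univ : Finset (Fin m))) (f := w)
      rw [hg] at hnorm
      exact absurd hnorm (by decide)

lemma CycVec.pos_set {w : Fin m → ℤ} (h : CycVec e w) : {i | 0 < w i} = {i | w i = 1} := by
  ext i
  have := h.2.1 i
  simp only [Set.mem_setOf_eq]
  omega

lemma CycVec.neg_set {w : Fin m → ℤ} (h : CycVec e w) : {i | w i < 0} = {i | w i = -1} := by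
  ext i
  have := h.2.1 i
  simp only [Set.mem_setOf_eq]
  omega

lemma cast_AdegF (u : Fin m →₀ ℕ) (j : Fin n) :
    ((AdegF e u j : ℕ) : ℤ) = ∑ i, (incid e i j : ℤ) * (u i : ℤ) := by
  rw [AdegF_apply]
  push_cast
  rfl

lemma adeg_eq_iff_ker (u b : Fin m →₀ ℕ) :
    AdegF e u = AdegF e b ↔
      (∀ j, ∑ i, (incid e i j : ℤ) * ((u i : ℤ) - (b i : ℤ)) = 0) := by
  constructor
  · intro h j
    simp only [mul_sub, Finset.sum_sub_distrib]
    rw [← cast_AdegF, ← cast_AdegF, h]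
    ring
  · intro h
    ext j
    have := h j
    simp only [mul_sub, Finset.sum_sub_distrib] at this
    rw [← cast_AdegF, ← cast_AdegF] at this
    omega

/-- every circuit is (plus or minus) an alternating cycle vector -/
lemma circuit_pm_cycvec (he : Function.Injective e) (hl : ∀ i, ¬ (e i).IsDiag)
    (hbip : IsBipartite e) {u₀ : Fin m → ℤ} (hc : IsCircuit e u₀) :
    ∃ w : Fin m → ℤ, CycVec e w ∧ (u₀ = w ∨ u₀ = -w) := by
  obtain ⟨hne, hker, hmin, hgcd⟩ := hc
  obtain ⟨w, h1, h2, h3, h4, h5, h6, h7⟩ := exists_good_circuit e he hl hbip hne hker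
  have hCyc : CycVec e w := ⟨h1, h2, h5, h6, h7⟩
  have hsub : {i | w i ≠ 0} ⊆ {i | u₀ i ≠ 0} := by
    intro i hi
    simp only [Set.mem_setOf_eq] at hi ⊢
    rcases h2 i with h | h | h
    · exact absurd h hi
    · have := h3 i h; omega
    · have := h4 i h; omega
  have hsupp_eq : {i | w i ≠ 0} = {i | u₀ i ≠ 0} :=
    hmin w (hCyc.ne_zero e) h1 hsub
  obtain ⟨c, hcw⟩ := h7 u₀ hker (fun i hiw => by
    by_contra hne'
    have : i ∈ {i | u₀ i ≠ 0} := hne'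
    rw [← hsupp_eq] at this
    exact this hiw)
  have hc1 : c = 1 ∨ c = -1 := by
    have hdvd : ∀ i, c ∣ u₀ i := by
      intro i
      rw [hcw]
      exact ⟨w i, rfl⟩
    have : c ∣ Finset.univ.gcd u₀ := Finset.dvd_gcd (fun i _ => hdvd i)
    rw [hgcd] at this
    exact Int.isUnit_iff.mp (isUnit_of_dvd_one this)
  refine ⟨w, hCyc, ?_⟩
  rcases hc1 with rfl | rfl
  · left; rw [hcw]; simp
  · right; rw [hcw]; funext i; simp

/-- description of `circuitSupports` via alternating cycle vectors -/
lemma circuitSupports_iff (he : Function.Injective e) (hl : ∀ i, ¬ (e i).IsDiag)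
    (hbip : IsBipartite e) (E : Set (Fin m)) :
    E ∈ circuitSupports e ↔ ∃ w : Fin m → ℤ, CycVec e w ∧ E = {i | w i = 1} := by
  constructor
  · rintro ⟨u₀, hc, hE | hE⟩
    · obtain ⟨w, hCyc, hu | hu⟩ := circuit_pm_cycvec e he hl hbip hc
      · exact ⟨w, hCyc, by rw [hE, hu, hCyc.pos_set e]⟩
      · refine ⟨-w, hCyc.neg e, ?_⟩
        rw [hE, hu]
        ext i
        have := hCyc.2.1 i
        simp only [Set.mem_setOf_eq, Pi.neg_apply]
        omega
    · obtain ⟨w, hCyc, hu | hu⟩ := circuit_pm_cycvec e he hl hbip hc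
      · refine ⟨-w, hCyc.neg e, ?_⟩
        rw [hE, hu]
        ext i
        have := hCyc.2.1 i
        simp only [Set.mem_setOf_eq, Pi.neg_apply]
        omega
      · refine ⟨w, hCyc, ?_⟩
        rw [hE, hu]
        ext i
        have := hCyc.2.1 i
        simp only [Set.mem_setOf_eq, Pi.neg_apply]
        omega
  · rintro ⟨w, hCyc, rfl⟩
    exact ⟨w, hCyc.isCircuit e, Or.inl (hCyc.pos_set e).symm⟩

end TP
namespace TP
open Finset MvPolynomial

variable {n m : ℕ} (e : Fin m → Sym2 (Fin n))

/-- indicator finsupp of the set where `w` equals `1`. -/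
noncomputable def posPart (w : Fin m → ℤ) : Fin m →₀ ℕ :=
  Finsupp.equivFunOnFinite.symm (fun i => if w i = 1 then 1 else 0)

/-- indicator finsupp of the set where `w` equals `-1`. -/
noncomputable def negPart (w : Fin m → ℤ) : Fin m →₀ ℕ :=
  Finsupp.equivFunOnFinite.symm (fun i => if w i = -1 then 1 else 0)

lemma posPart_apply (w : Fin m → ℤ) (i : Fin m) :
    posPart w i = if w i = 1 then 1 else 0 := rfl

lemma negPart_apply (w : Fin m → ℤ) (i : Fin m) :
    negPart w i = if w i = -1 then 1 else 0 := rfl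

lemma supp_posPart (w : Fin m → ℤ) : {i | posPart w i ≠ 0} = {i | w i = 1} := by
  ext i
  simp only [Set.mem_setOf_eq, posPart_apply]
  by_cases h : w i = 1 <;> simp [h]

lemma adeg_posPart_negPart {w : Fin m → ℤ} (hCyc : CycVec e w) :
    AdegF e (posPart w) = AdegF e (negPart w) := by
  rw [adeg_eq_iff_ker]
  intro j
  rw [← hCyc.1 j]
  refine Finset.sum_congr rfl fun i _ => ?_
  congr 1
  rw [posPart_apply, negPart_apply]
  rcases hCyc.2.1 i with h | h | h <;> rw [h] <;> norm_num

lemma negPart_ne_posPart {w : Fin m → ℤ} (hCyc : CycVec e w) :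
    negPart w ≠ posPart w := by
  obtain ⟨i, hi⟩ := hCyc.2.2.1
  intro h
  have := DFunLike.congr_fun h i
  rw [posPart_apply, negPart_apply, hi] at this
  norm_num at this

lemma posPart_ne_negPart {w : Fin m → ℤ} (hCyc : CycVec e w) :
    posPart w ≠ negPart w := (negPart_ne_posPart e hCyc).symm

lemma ntriv_posPart {w : Fin m → ℤ} (hCyc : CycVec e w) : Ntriv e (posPart w) :=
  ⟨negPart w, negPart_ne_posPart e hCyc, (adeg_posPart_negPart e hCyc).symm⟩

lemma sub_ne_zero_of_finsupp {a b : Fin m →₀ ℕ} (hab : a ≠ b) :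
    (fun i => ((a i : ℤ) - b i)) ≠ 0 := by
  intro h0
  apply hab
  ext i
  have := congrFun h0 i
  simp only [Pi.zero_apply] at this
  omega

lemma good_mem_Cmin (he : Function.Injective e) (hl : ∀ i, ¬ (e i).IsDiag)
    (hbip : IsBipartite e) {u : Fin m →₀ ℕ} (hg : Good e u) :
    {i | u i ≠ 0} ∈ Cmin e := by
  obtain ⟨⟨b, hbu, hdeg⟩, hmin⟩ := hg
  have hvne : (fun i => ((u i : ℤ) - b i)) ≠ 0 := sub_ne_zero_of_finsupp (fun h => hbu h.symm)
  have hker : ∀ j, ∑ i, (incid e i j : ℤ) * ((u i : ℤ) - b i) = 0 :=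
    (adeg_eq_iff_ker e u b).mp hdeg.symm
  obtain ⟨w, h1, h2, h3, h4, h5, h6, h7⟩ := exists_good_circuit e he hl hbip hvne hker
  have hCyc : CycVec e w := ⟨h1, h2, h5, h6, h7⟩
  have hle : posPart w ≤ u := by
    rw [Finsupp.le_def]
    intro i
    rw [posPart_apply]
    by_cases h : w i = 1
    · rw [if_pos h]
      have := h3 i h
      omega
    · rw [if_neg h]
      omega
  have heq : posPart w = u := by
    by_contra hne
    exact hmin _ hle hne (ntriv_posPart e hCyc)
  have hsuppu : {i | u i ≠ 0} = {i | w i = 1} := by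
    rw [← heq]
    exact supp_posPart w
  refine ⟨?_, ?_⟩
  · rw [circuitSupports_iff e he hl hbip]
    exact ⟨w, hCyc, hsuppu⟩
  · intro E' hE' hE'sub
    rw [circuitSupports_iff e he hl hbip] at hE'
    obtain ⟨w', hCyc', rfl⟩ := hE'
    have hle' : posPart w' ≤ u := by
      rw [Finsupp.le_def]
      intro i
      rw [posPart_apply]
      by_cases h : w' i = 1
      · rw [if_pos h]
        have hi : i ∈ {i | u i ≠ 0} := hE'sub h
        simp only [Set.mem_setOf_eq] at hi
        omega
      · rw [if_neg h]
        omega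
    have heq' : posPart w' = u := by
      by_contra hne
      exact hmin _ hle' hne (ntriv_posPart e hCyc')
    rw [← supp_posPart w', heq']

lemma Cmin_good (he : Function.Injective e) (hl : ∀ i, ¬ (e i).IsDiag)
    (hbip : IsBipartite e) {E : Set (Fin m)} (hE : E ∈ Cmin e) :
    ∃ u : Fin m →₀ ℕ, Good e u ∧ E = {i | u i ≠ 0} := by
  obtain ⟨hEc, hEmin⟩ := hE
  rw [circuitSupports_iff e he hl hbip] at hEc
  obtain ⟨w, hCyc, rfl⟩ := hEc
  refine ⟨posPart w, ⟨ntriv_posPart e hCyc, ?_⟩, (supp_posPart w).symm⟩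
  intro a hle hne hNt
  obtain ⟨b', hb'ne, hb'deg⟩ := hNt
  have hvne : (fun i => ((a i : ℤ) - b' i)) ≠ 0 := sub_ne_zero_of_finsupp (fun h => hb'ne h.symm)
  have hker : ∀ j, ∑ i, (incid e i j : ℤ) * ((a i : ℤ) - b' i) = 0 :=
    (adeg_eq_iff_ker e a b').mp hb'deg.symm
  obtain ⟨w'', h1, h2, h3, h4, h5, h6, h7⟩ := exists_good_circuit e he hl hbip hvne hker
  have hCyc'' : CycVec e w'' := ⟨h1, h2, h5, h6, h7⟩
  have hsubE : {i | w'' i = 1} ⊆ {i | w i = 1} := by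
    intro i hi
    simp only [Set.mem_setOf_eq] at hi ⊢
    have hva := h3 i hi
    have hai : a i ≠ 0 := by omega
    have h1le : posPart w i ≠ 0 := by
      have := hle i
      rw [posPart_apply] at this ⊢
      omega
    rw [posPart_apply] at h1le
    by_cases h : w i = 1
    · exact h
    · rw [if_neg h] at h1le
      exact absurd rfl h1le
  have hE'' : {i | w'' i = 1} ∈ circuitSupports e := by
    rw [circuitSupports_iff e he hl hbip]
    exact ⟨w'', hCyc'', rfl⟩
  have heqE : {i | w'' i = 1} = {i | w i = 1} := hEmin _ hE'' hsubE
  -- find a point of E missing from the support of a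
  obtain ⟨i₀, hi₀⟩ : ∃ i₀, a i₀ ≠ posPart w i₀ := by
    by_contra hall
    push_neg at hall
    exact hne (Finsupp.ext hall)
  have hle₀ := hle i₀
  rw [posPart_apply] at hi₀ hle₀
  by_cases hwi₀ : w i₀ = 1
  · rw [if_pos hwi₀] at hi₀ hle₀
    have ha₀ : a i₀ = 0 := by omega
    have : i₀ ∈ {i | w'' i = 1} := by
      rw [heqE]
      exact hwi₀
    simp only [Set.mem_setOf_eq] at this
    have := h3 i₀ this
    omega
  · rw [if_neg hwi₀] at hi₀ hle₀
    omega

end TP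
/-- For a finite connected bipartite graph `G`, the set `C_min` equals
the set of supports of the indispensable monomials of `I_G`. -/
theorem Cmin_eq_supports_indispensable_of_bipartite {K : Type*} [Field K] [IsAlgClosed K]
    {n m : ℕ} (e : Fin m → Sym2 (Fin n))
    (he : Function.Injective e) (hl : ∀ i, ¬ (e i).IsDiag)
    (hconn : (SimpleGraph.fromEdgeSet (Set.range e)).Connected)
    (hbip : IsBipartite e) :
    Cmin e = {E : Set (Fin m) | ∃ u : Fin m →₀ ℕ,
      IndispensableMonomial (toricIdeal K e) u ∧ E = {i | u i ≠ 0}} := by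
  ext E
  simp only [Set.mem_setOf_eq]
  constructor
  · intro hE
    obtain ⟨u, hgood, hsupp⟩ := TP.Cmin_good e he hl hbip hE
    exact ⟨u, TP.good_indisp e hgood, hsupp⟩
  · rintro ⟨u, hind, rfl⟩
    have hgood : TP.Good e u := by
      by_contra hng
      exact TP.notgood_notindisp e hl hng hind
    exact TP.good_mem_Cmin e he hl hbip hgood
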